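/- Under assumptions (H) on f, the function x ↦ |Ξ_f(x)|/x is integrable on (0,∞), i.e. ∫_0^∞ |Ξ_f(x)|/x dx < ∞. -/

import Mathlib

open Real MeasureTheory Filter Set

open FourierTransform


lemma integrable_of_decay (f : ℝ → ℂ) (M α : ℝ) (hM : 0 < M) (hα : 1 < α) (hc : Continuous f)
    (hbound : ∀ x : ℝ, ‖f x‖ ≤ M / (1 + |x|) ^ α) : Integrable f := by
  have h : Integrable (fun x : ℝ => M * (1 + ‖x‖) ^ (-α)) := by
    apply Integrable.const_mul
    apply integrable_one_add_norm (E := ℝ)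
    simpa using hα
  refine h.mono' hc.aestronglyMeasurable (ae_of_all _ fun x => ?_)
  have h2 : (0:ℝ) ≤ 1 + |x| := by positivity
  rw [Real.norm_eq_abs, Real.rpow_neg h2]
  calc ‖f x‖ ≤ M / (1 + |x|) ^ α := hbound x
  _ = M * ((1 + |x|) ^ α)⁻¹ := div_eq_mul_inv _ _

lemma fourier_decay (f : ℝ → ℂ) (hf : ContDiff ℝ 2 f) (hint : Integrable f)
    (hf' : Integrable (deriv f)) (hf'' : Integrable (deriv (deriv f))) (ξ : ℝ) (hξ : ξ ≠ 0) :
    ‖𝓕 f ξ‖ ≤ (∫ y, ‖deriv (deriv f) y‖) / (2 * π * |ξ|) ^ 2 := by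
  have hd1 : Differentiable ℝ f := hf.differentiable two_ne_zero
  have hC1 : ContDiff ℝ 1 (deriv f) := by
    have h12 : (2 : WithTop ℕ∞) = 1 + 1 := by norm_num
    rw [h12] at hf
    exact (contDiff_succ_iff_deriv.mp hf).2.2
  have hd2 : Differentiable ℝ (deriv f) := hC1.differentiable one_ne_zero
  have h1 := Real.fourier_deriv hint hd1 hf'
  have h2 := Real.fourier_deriv hf' hd2 hf''
  have key : 𝓕 (deriv (deriv f)) ξ = (2 * π * Complex.I * ξ) • ((2 * π * Complex.I * ξ) • 𝓕 f ξ) := by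
    rw [h2]; simp only; rw [h1]
  have hnorm : ‖𝓕 (deriv (deriv f)) ξ‖ = (2 * π * |ξ|) ^ 2 * ‖𝓕 f ξ‖ := by
    rw [key, norm_smul, norm_smul]
    have : ‖(2 * π * Complex.I * (ξ:ℂ))‖ = 2 * π * |ξ| := by
      simp [abs_of_pos Real.pi_pos, Real.pi_pos.le]
    rw [this]; ring
  have hb : ‖𝓕 (deriv (deriv f)) ξ‖ ≤ ∫ y, ‖deriv (deriv f) y‖ :=
    VectorFourier.norm_fourierIntegral_le_integral_norm _ _ _ _ _
  have hpos : (0:ℝ) < (2 * π * |ξ|) ^ 2 := by positivity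
  rw [le_div_iff₀ hpos, mul_comm, ← hnorm]
  exact hb

lemma summable_ite_decomp {E : Type*} [AddCommMonoid E] [TopologicalSpace E] [ContinuousAdd E]
    {g : ℤ → E} (h : Summable (fun k : ℤ => if k = 0 then 0 else g k)) : Summable g := by
  have h0 : Summable (fun k : ℤ => if k = 0 then g 0 else 0) := (hasSum_ite_eq 0 (g 0)).summable
  refine (h0.add h).congr fun k => ?_
  by_cases hk : k = 0 <;> simp [hk]

lemma summable_ite_rpow (c q : ℝ) (hq : 1 < q) :
    Summable (fun k : ℤ => if k = 0 then (0:ℝ) else c * |(k:ℝ)| ^ (-q)) := by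
  refine ((Real.summable_abs_int_rpow hq).mul_left c).congr fun k => ?_
  by_cases hk : k = 0
  · simp [hk, Real.zero_rpow (by linarith : -q ≠ 0)]
  · simp [hk]

lemma decay_div_bound (C₂ x : ℝ) (hx : 0 < x) (ξ : ℝ) (hξ : ξ ≠ 0) :
    C₂ / (2 * π * |ξ / x|) ^ 2 = (C₂ * x ^ 2 / (2 * π) ^ 2) * |ξ| ^ (-(2:ℝ)) := by
  have habs : (2 * π * |ξ / x|) ^ 2 = (2 * π) ^ 2 * ξ ^ 2 / x ^ 2 := by
    rw [mul_pow, sq_abs, div_pow]; ring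
  have hrpow : |ξ| ^ (-(2:ℝ)) = (ξ ^ 2)⁻¹ := by
    rw [Real.rpow_neg (abs_nonneg _), show ((2:ℝ)) = ((2:ℕ):ℝ) by norm_num,
      Real.rpow_natCast, sq_abs]
  rw [habs, hrpow]
  have h2 : ξ ^ 2 ≠ 0 := pow_ne_zero _ hξ
  field_simp

lemma int_abs_cast (k : ℤ) (hk : k ≠ 0) : (1:ℝ) ≤ |(k:ℝ)| := by
  rw [← Int.cast_abs]
  exact_mod_cast Int.one_le_abs hk

lemma f_term_bound (f : ℝ → ℂ) (M α : ℝ) (hM : 0 < M) (hα : 1 < α)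
    (hbound : ∀ y : ℝ, ‖f y‖ ≤ M / (1 + |y|) ^ α)
    (k : ℤ) (hk : k ≠ 0) (x ε : ℝ) (hε : 0 < ε) (hx : ε ≤ x) :
    ‖f (k * x)‖ ≤ (M * ε ^ (-α)) * |(k:ℝ)| ^ (-α) := by
  have hk1 : (1:ℝ) ≤ |(k:ℝ)| := int_abs_cast k hk
  have hkx : |(k:ℝ)| * ε ≤ |(k:ℝ) * x| := by
    rw [abs_mul]
    have hx0 : 0 < x := lt_of_lt_of_le hε hx
    rw [abs_of_pos hx0]
    exact mul_le_mul_of_nonneg_left hx (abs_nonneg _)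
  have hle : (|(k:ℝ)| * ε) ^ α ≤ (1 + |(k:ℝ) * x|) ^ α := by
    apply Real.rpow_le_rpow (by positivity) _ (by linarith)
    calc |(k:ℝ)| * ε ≤ |(k:ℝ) * x| := hkx
      _ ≤ 1 + |(k:ℝ) * x| := by linarith [abs_nonneg ((k:ℝ) * x)]
  calc ‖f (k * x)‖ ≤ M / (1 + |(k:ℝ) * x|) ^ α := hbound _
    _ ≤ M / (|(k:ℝ)| * ε) ^ α := by
        apply div_le_div_of_nonneg_left hM.le (by positivity) hle
    _ = (M * ε ^ (-α)) * |(k:ℝ)| ^ (-α) := by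
        rw [Real.mul_rpow (abs_nonneg _) hε.le, Real.rpow_neg hε.le,
          Real.rpow_neg (abs_nonneg _), div_eq_mul_inv, mul_inv]
        ring

lemma theta_contOn (f : ℝ → ℂ) (hc : Continuous f) (M α : ℝ) (hM : 0 < M) (hα : 1 < α)
    (hbound : ∀ y : ℝ, ‖f y‖ ≤ M / (1 + |y|) ^ α) :
    ContinuousOn (fun x : ℝ => ∑' k : ℤ, f (k * x)) (Ioi 0) := by
  intro x₀ hx₀
  have hx₀' : (0:ℝ) < x₀ := hx₀
  set ε := x₀ / 2 with hεdef
  have hε : 0 < ε := by positivity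
  have hcont : ContinuousOn (fun x : ℝ => ∑' k : ℤ, f (k * x)) (Ioi ε) := by
    apply continuousOn_tsum
      (u := fun k : ℤ => if k = 0 then M else (M * ε ^ (-α)) * |(k:ℝ)| ^ (-α))
    · intro k
      exact (hc.comp (continuous_const.mul continuous_id)).continuousOn
    · have h1 : Summable (fun k : ℤ => if k = 0 then M else (0:ℝ)) :=
        (hasSum_ite_eq 0 M).summable
      refine (h1.add (summable_ite_rpow (M * ε ^ (-α)) α hα)).congr fun k => ?_
      by_cases hk : k = 0 <;> simp [hk]
    · intro k x hx
      by_cases hk : k = 0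
      · simp only [hk, if_pos rfl, Int.cast_zero, zero_mul]
        calc ‖f 0‖ ≤ M / (1 + |(0:ℝ)|) ^ α := hbound 0
          _ = M := by norm_num
      · rw [if_neg hk]
        exact f_term_bound f M α hM hα hbound k hk x ε hε (le_of_lt hx)
  exact (hcont.continuousAt (isOpen_Ioi.mem_nhds (by
    simp only [mem_Ioi, hεdef]; linarith))).continuousWithinAt

lemma fourier_comp_mul (f : ℝ → ℂ) (c : ℝ) (hc : 0 < c) (ξ : ℝ) :
    𝓕 (fun t => f (c * t)) ξ = c⁻¹ • 𝓕 f (ξ / c) := by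
  rw [Real.fourier_real_eq]
  have step : ∀ t : ℝ, 𝐞 (-(t * ξ)) • f (c * t)
      = (fun u => 𝐞 (-(u * (ξ / c))) • f u) (c * t) := by
    intro t; simp only; congr 2; field_simp
  calc (∫ t : ℝ, 𝐞 (-(t * ξ)) • f (c * t))
      = ∫ t : ℝ, (fun u => 𝐞 (-(u * (ξ / c))) • f u) (c * t) := by simp_rw [step]
    _ = |c⁻¹| • ∫ u : ℝ, 𝐞 (-(u * (ξ / c))) • f u :=
        MeasureTheory.Measure.integral_comp_mul_left (fun u => 𝐞 (-(u * (ξ / c))) • f u) c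
    _ = c⁻¹ • 𝓕 f (ξ / c) := by
        rw [abs_of_pos (inv_pos.2 hc), ← Real.fourier_real_eq]

lemma isBigO_cocompact_of_bound (g : ℝ → ℂ) (C p q : ℝ) (hC : 0 ≤ C) (hpq : q ≤ p)
    (h : ∀ ξ : ℝ, 1 ≤ |ξ| → ‖g ξ‖ ≤ C * |ξ| ^ (-p)) :
    g =O[Filter.cocompact ℝ] (|·| ^ (-q)) := by
  apply Asymptotics.IsBigO.of_bound C
  have key : ∀ ξ : ℝ, 1 ≤ |ξ| → ‖g ξ‖ ≤ C * ‖|ξ| ^ (-q)‖ := by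
    intro ξ hξ
    rw [Real.norm_eq_abs, abs_of_nonneg (Real.rpow_nonneg (abs_nonneg _) _)]
    refine (h ξ hξ).trans (mul_le_mul_of_nonneg_left ?_ hC)
    exact Real.rpow_le_rpow_of_exponent_le hξ (by linarith)
  rw [cocompact_eq_atBot_atTop, eventually_sup]
  constructor
  · filter_upwards [eventually_le_atBot (-1:ℝ)] with ξ hξ
    exact key ξ (by rw [abs_of_nonpos (by linarith)]; linarith)
  · filter_upwards [eventually_ge_atTop (1:ℝ)] with ξ hξ
    exact key ξ (by rw [abs_of_nonneg (by linarith)]; linarith)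

lemma poisson (f : ℝ → ℂ) (hc : Continuous f) {b : ℝ} (hb1 : 1 < b) (hb2 : b ≤ 2)
    (hfO : f =O[Filter.cocompact ℝ] (|·| ^ (-b)))
    (C₂ : ℝ) (hC₂ : 0 ≤ C₂)
    (hdecay : ∀ ξ : ℝ, ξ ≠ 0 → ‖𝓕 f ξ‖ ≤ C₂ / (2 * π * |ξ|) ^ 2)
    (x : ℝ) (hx : 0 < x) :
    ∑' k : ℤ, f (k * x) = (x : ℝ)⁻¹ • ∑' m : ℤ, 𝓕 f (m / x) := by
  set g : ℝ → ℂ := fun t => f (x * t) with hgdef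
  have hgc : Continuous g := hc.comp (continuous_const.mul continuous_id)
  have hgF : ∀ ξ, 𝓕 g ξ = x⁻¹ • 𝓕 f (ξ / x) := fourier_comp_mul f x hx
  have hgO : g =O[Filter.cocompact ℝ] (|·| ^ (-b)) := by
    have htend : Filter.Tendsto (fun t : ℝ => x * t)
        (Filter.cocompact ℝ) (Filter.cocompact ℝ) :=
      Filter.tendsto_cocompact_mul_left₀ hx.ne'
    have h1 := hfO.comp_tendsto htend
    refine h1.trans ?_
    have heq : ((|·| ^ (-b)) ∘ fun t : ℝ => x * t)
        = fun t : ℝ => (|x| ^ (-b)) * |t| ^ (-b) := by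
      funext t
      simp only [Function.comp]
      rw [abs_mul, Real.mul_rpow (abs_nonneg _) (abs_nonneg _)]
    rw [heq]
    exact (Asymptotics.isBigO_refl _ _).const_mul_left _
  have hgFO : (𝓕 g) =O[Filter.cocompact ℝ] (|·| ^ (-b)) := by
    apply isBigO_cocompact_of_bound _ (x⁻¹ * (C₂ * x ^ 2 / (2 * π) ^ 2)) 2 b
      (by positivity) hb2
    intro ξ hξ
    have hξ0 : ξ ≠ 0 := by intro h; rw [h] at hξ; simp at hξ; linarith
    rw [hgF ξ, norm_smul, Real.norm_eq_abs, abs_of_pos (inv_pos.2 hx)]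
    have hb : ‖𝓕 f (ξ / x)‖ ≤ C₂ / (2 * π * |ξ / x|) ^ 2 :=
      hdecay _ (div_ne_zero hξ0 hx.ne')
    have habs : (2 * π * |ξ / x|) ^ 2 = (2 * π) ^ 2 * ξ ^ 2 / x ^ 2 := by
      rw [mul_pow, sq_abs, div_pow]; ring
    have hrpow : |ξ| ^ (-(2:ℝ)) = (ξ ^ 2)⁻¹ := by
      rw [Real.rpow_neg (abs_nonneg _), show ((2:ℝ)) = ((2:ℕ):ℝ) by norm_num,
        Real.rpow_natCast, sq_abs]
    have h2 : C₂ / ((2 * π) ^ 2 * ξ ^ 2 / x ^ 2) = (C₂ * x ^ 2 / (2 * π) ^ 2) * (ξ ^ 2)⁻¹ := by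
      have : ξ ^ 2 ≠ 0 := pow_ne_zero _ hξ0
      field_simp
    calc x⁻¹ * ‖𝓕 f (ξ / x)‖ ≤ x⁻¹ * (C₂ / (2 * π * |ξ / x|) ^ 2) :=
          mul_le_mul_of_nonneg_left hb (inv_pos.2 hx).le
      _ = x⁻¹ * (C₂ * x ^ 2 / (2 * π) ^ 2) * |ξ| ^ (-(2:ℝ)) := by
          rw [habs, h2, hrpow]; ring
  have P := Real.tsum_eq_tsum_fourier_of_rpow_decay hgc hb1 hgO hgFO 0
  have hL : ∀ n : ℤ, g (0 + n) = f (n * x) := by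
    intro n; simp only [hgdef, zero_add, mul_comm]
  have hR : ∀ n : ℤ, 𝓕 g n * fourier n ((0:ℝ) : UnitAddCircle) = x⁻¹ • 𝓕 f (n / x) := by
    intro n
    have : ((0:ℝ) : UnitAddCircle) = 0 := by norm_num
    rw [this, fourier_eval_zero, mul_one, hgF]
  calc ∑' k : ℤ, f (k * x) = ∑' n : ℤ, g (0 + n) := (tsum_congr hL).symm
    _ = ∑' n : ℤ, 𝓕 g n * fourier n ((0:ℝ) : UnitAddCircle) := P
    _ = ∑' n : ℤ, x⁻¹ • 𝓕 f (n / x) := tsum_congr hR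
    _ = x⁻¹ • ∑' m : ℤ, 𝓕 f (m / x) := tsum_const_smul'' _
/-- `Ξ_f(x) = Θ_f(x) - f(0)·1_{x>1} - f̂(0)/x`, where `Θ_f(x) = ∑_{k∈ℤ} f(kx)`
and `f̂(0) = ∫ f`. -/
noncomputable def Xi (f : ℝ → ℂ) (x : ℝ) : ℂ :=
  (∑' k : ℤ, f (k * x)) - (if 1 < x then f 0 else 0) - (∫ y : ℝ, f y) / (x : ℂ)

theorem xi_integrable (f : ℝ → ℂ) (hf : ContDiff ℝ 2 f)
    (hf' : Integrable (deriv f)) (hf'' : Integrable (deriv (deriv f)))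
    (M α : ℝ) (hM : 0 < M) (hα : 1 < α)
    (hbound : ∀ x : ℝ, ‖f x‖ ≤ M / (1 + |x|) ^ α) :
    IntegrableOn (fun x : ℝ => ‖Xi f x‖ / x) (Set.Ioi 0) := by
  have hcontf : Continuous f := hf.continuous
  have hint : Integrable f := integrable_of_decay f M α hM hα hcontf hbound
  set C₂ := ∫ y, ‖deriv (deriv f) y‖ with hC₂def
  have hC₂ : 0 ≤ C₂ := integral_nonneg (fun y => norm_nonneg _)
  have hdecay : ∀ ξ : ℝ, ξ ≠ 0 → ‖𝓕 f ξ‖ ≤ C₂ / (2 * π * |ξ|) ^ 2 :=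
    fourier_decay f hf hint hf' hf''
  set b := min α 2 with hbdef
  have hb1 : 1 < b := lt_min hα one_lt_two
  have hb2 : b ≤ 2 := min_le_right _ _
  have hba : b ≤ α := min_le_left _ _
  have hfO : f =O[Filter.cocompact ℝ] (|·| ^ (-b)) := by
    apply isBigO_cocompact_of_bound f M α b hM.le hba
    intro ξ hξ
    have hξ0 : (0:ℝ) < |ξ| := by linarith
    have h1 : |ξ| ^ α ≤ (1 + |ξ|) ^ α :=
      Real.rpow_le_rpow (abs_nonneg _) (by linarith [abs_nonneg ξ]) (by linarith)
    calc ‖f ξ‖ ≤ M / (1 + |ξ|) ^ α := hbound ξ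
      _ ≤ M / |ξ| ^ α :=
          div_le_div_of_nonneg_left hM.le (Real.rpow_pos_of_pos hξ0 _) h1
      _ = M * |ξ| ^ (-α) := by rw [Real.rpow_neg (abs_nonneg _), div_eq_mul_inv]
  have hP : ∀ x : ℝ, 0 < x → ∑' k : ℤ, f (k * x) = (x:ℝ)⁻¹ • ∑' m : ℤ, 𝓕 f (m / x) :=
    poisson f hcontf hb1 hb2 hfO C₂ hC₂ hdecay
  have hF0 : 𝓕 f 0 = ∫ y, f y := by
    rw [Real.fourier_real_eq]; simp
  set S2 : ℝ := ∑' m : ℤ, |(m:ℝ)| ^ (-(2:ℝ)) with hS2def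
  set Sα : ℝ := ∑' m : ℤ, |(m:ℝ)| ^ (-α) with hSαdef
  set Cs : ℝ := C₂ / (2 * π) ^ 2 * S2 with hCsdef
  set Cl : ℝ := M * Sα + ‖∫ y, f y‖ with hCldef
  -- small-x bound
  have hsmall : ∀ x : ℝ, x ∈ Ioc (0:ℝ) 1 → ‖Xi f x‖ ≤ Cs * x := by
    rintro x ⟨hx0, hx1⟩
    have hterm : ∀ m : ℤ, ‖(if m = 0 then (0:ℂ) else 𝓕 f (m / x))‖ ≤
        (C₂ * x ^ 2 / (2 * π) ^ 2) * |(m:ℝ)| ^ (-(2:ℝ)) := by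
      intro m
      by_cases hm : m = 0
      · simp [hm, Real.zero_rpow (by norm_num : (-(2:ℝ)) ≠ 0)]
      · rw [if_neg hm]
        have hm0 : ((m:ℝ)) ≠ 0 := Int.cast_ne_zero.2 hm
        calc ‖𝓕 f ((m:ℝ) / x)‖ ≤ C₂ / (2 * π * |(m:ℝ) / x|) ^ 2 :=
              hdecay _ (div_ne_zero hm0 hx0.ne')
          _ = (C₂ * x ^ 2 / (2 * π) ^ 2) * |(m:ℝ)| ^ (-(2:ℝ)) :=
              decay_div_bound C₂ x hx0 _ hm0
    have hu : Summable (fun m : ℤ => (C₂ * x ^ 2 / (2 * π) ^ 2) * |(m:ℝ)| ^ (-(2:ℝ))) :=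
      (Real.summable_abs_int_rpow one_lt_two).mul_left _
    have hT : Summable (fun m : ℤ => if m = 0 then (0:ℂ) else 𝓕 f (m / x)) :=
      Summable.of_norm_bounded hu hterm
    have hTn : Summable (fun m : ℤ => ‖if m = 0 then (0:ℂ) else 𝓕 f (m / x)‖) :=
      Summable.of_nonneg_of_le (fun m => norm_nonneg _) hterm hu
    have hSm : Summable (fun m : ℤ => 𝓕 f ((m:ℝ) / x)) := summable_ite_decomp hT
    have hsplit := Summable.tsum_eq_add_tsum_ite hSm 0
    have hXieq : Xi f x = (x:ℝ)⁻¹ • ∑' m : ℤ, (if m = 0 then (0:ℂ) else 𝓕 f (m / x)) := by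
      show (∑' k : ℤ, f (k * x)) - (if 1 < x then f 0 else 0) - (∫ y, f y) / (x:ℂ) = _
      rw [hP x hx0, if_neg (by linarith), hsplit]
      have h0 : 𝓕 f (((0:ℤ):ℝ) / x) = ∫ y, f y := by
        rw [show (((0:ℤ):ℝ) / x) = 0 by simp, hF0]
      rw [h0, smul_add, sub_zero]
      have hsm : (x:ℝ)⁻¹ • (∫ y, f y) = (∫ y, f y) / (x:ℂ) := by
        rw [Complex.real_smul, div_eq_inv_mul]
        push_cast
        ring
      rw [hsm]
      ring
    rw [hXieq, norm_smul, Real.norm_eq_abs, abs_of_pos (inv_pos.2 hx0)]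
    have hnorm : ‖∑' m : ℤ, (if m = 0 then (0:ℂ) else 𝓕 f (m / x))‖ ≤
        (C₂ * x ^ 2 / (2 * π) ^ 2) * S2 := by
      refine (norm_tsum_le_tsum_norm hTn).trans ?_
      rw [hS2def, ← tsum_mul_left]
      exact hTn.tsum_le_tsum hterm hu
    calc x⁻¹ * ‖∑' m : ℤ, (if m = 0 then (0:ℂ) else 𝓕 f (m / x))‖
        ≤ x⁻¹ * ((C₂ * x ^ 2 / (2 * π) ^ 2) * S2) :=
          mul_le_mul_of_nonneg_left hnorm (inv_pos.2 hx0).le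
      _ = Cs * x := by rw [hCsdef]; field_simp
  -- large-x bound
  have hlarge : ∀ x : ℝ, x ∈ Ioi (1:ℝ) → ‖Xi f x‖ ≤ Cl / x := by
    intro x hx1
    have hx1' : (1:ℝ) < x := hx1
    have hx0 : (0:ℝ) < x := by linarith
    have hterm : ∀ k : ℤ, ‖(if k = 0 then (0:ℂ) else f (k * x))‖ ≤
        (M * x⁻¹) * |(k:ℝ)| ^ (-α) := by
      intro k
      by_cases hk : k = 0
      · simp [hk, Real.zero_rpow (by linarith : (-α) ≠ 0)]
      · rw [if_neg hk]
        have h1 : ‖f (k * x)‖ ≤ (M * x ^ (-α)) * |(k:ℝ)| ^ (-α) :=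
          f_term_bound f M α hM hα hbound k hk x x hx0 le_rfl
        refine h1.trans (mul_le_mul_of_nonneg_right (mul_le_mul_of_nonneg_left ?_ hM.le)
          (Real.rpow_nonneg (abs_nonneg _) _))
        calc x ^ (-α) ≤ x ^ (-1:ℝ) :=
              Real.rpow_le_rpow_of_exponent_le (by linarith) (by linarith)
          _ = x⁻¹ := by rw [Real.rpow_neg_one]
    have hu : Summable (fun k : ℤ => (M * x⁻¹) * |(k:ℝ)| ^ (-α)) :=
      (Real.summable_abs_int_rpow hα).mul_left _
    have hT : Summable (fun k : ℤ => if k = 0 then (0:ℂ) else f (k * x)) :=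
      Summable.of_norm_bounded hu hterm
    have hTn : Summable (fun k : ℤ => ‖if k = 0 then (0:ℂ) else f (k * x)‖) :=
      Summable.of_nonneg_of_le (fun m => norm_nonneg _) hterm hu
    have hSf : Summable (fun k : ℤ => f ((k:ℝ) * x)) := summable_ite_decomp hT
    have hsplit := Summable.tsum_eq_add_tsum_ite hSf 0
    have hXieq : Xi f x = (∑' k : ℤ, (if k = 0 then (0:ℂ) else f (k * x)))
        - (∫ y, f y) / (x:ℂ) := by
      show (∑' k : ℤ, f (k * x)) - (if 1 < x then f 0 else 0) - (∫ y, f y) / (x:ℂ) = _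
      rw [hsplit, if_pos hx1']
      have h0 : f (((0:ℤ):ℝ) * x) = f 0 := by norm_num
      rw [h0]
      ring
    rw [hXieq]
    have h2 : ‖(∫ y, f y) / (x:ℂ)‖ = ‖∫ y, f y‖ / x := by
      rw [norm_div, Complex.norm_real, Real.norm_eq_abs, abs_of_pos hx0]
    have hnorm : ‖∑' k : ℤ, (if k = 0 then (0:ℂ) else f (k * x))‖ ≤ M * Sα * x⁻¹ := by
      refine (norm_tsum_le_tsum_norm hTn).trans ?_
      have := hTn.tsum_le_tsum hterm hu
      rw [tsum_mul_left] at this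
      rw [hSαdef]
      calc ∑' k : ℤ, ‖if k = 0 then (0:ℂ) else f (k * x)‖
          ≤ (M * x⁻¹) * ∑' m : ℤ, |(m:ℝ)| ^ (-α) := this
        _ = M * (∑' m : ℤ, |(m:ℝ)| ^ (-α)) * x⁻¹ := by ring
    calc ‖(∑' k : ℤ, (if k = 0 then (0:ℂ) else f (k * x))) - (∫ y, f y) / (x:ℂ)‖
        ≤ ‖∑' k : ℤ, (if k = 0 then (0:ℂ) else f (k * x))‖ + ‖(∫ y, f y) / (x:ℂ)‖ :=
          norm_sub_le _ _
      _ ≤ M * Sα * x⁻¹ + ‖∫ y, f y‖ / x := by rw [h2]; exact add_le_add_left hnorm _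
      _ = Cl / x := by rw [hCldef]; field_simp
  -- measurability
  have hΘ : ContinuousOn (fun x : ℝ => ∑' k : ℤ, f (k * x)) (Ioi 0) :=
    theta_contOn f hcontf M α hM hα hbound
  have hXim : AEStronglyMeasurable (Xi f) (volume.restrict (Ioi 0)) := by
    have h1 : AEStronglyMeasurable (fun x : ℝ => ∑' k : ℤ, f (k * x)) (volume.restrict (Ioi 0)) :=
      hΘ.aestronglyMeasurable measurableSet_Ioi
    have h2 : AEStronglyMeasurable (fun x : ℝ => if 1 < x then f 0 else 0)
        (volume.restrict (Ioi 0)) := by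
      have : (fun x : ℝ => if 1 < x then f 0 else 0) = (Ioi (1:ℝ)).indicator (fun _ => f 0) := by
        funext y; simp [Set.indicator, mem_Ioi]
      rw [this]
      exact aestronglyMeasurable_const.indicator measurableSet_Ioi
    have h3 : ContinuousOn (fun x : ℝ => (∫ y, f y) / (x:ℂ)) (Ioi 0) := by
      apply ContinuousOn.div continuousOn_const Complex.continuous_ofReal.continuousOn
      intro x hx
      exact_mod_cast (ne_of_gt (show (0:ℝ) < x from hx))
    exact (h1.sub h2).sub (h3.aestronglyMeasurable measurableSet_Ioi)
  have hmeas : AEStronglyMeasurable (fun x : ℝ => ‖Xi f x‖ / x)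
      (volume.restrict (Ioi 0)) := by
    simp_rw [div_eq_mul_inv]
    exact hXim.norm.mul (Measurable.aestronglyMeasurable (measurable_id.inv))
  -- majorant
  set G : ℝ → ℝ := fun x => if x ≤ 1 then Cs else Cl / x ^ 2 with hGdef
  have hGint : IntegrableOn G (Ioi 0) := by
    have hsplit : Ioi (0:ℝ) = Ioc 0 1 ∪ Ioi 1 := (Ioc_union_Ioi_eq_Ioi zero_le_one).symm
    rw [hsplit]
    apply IntegrableOn.union
    · refine (integrableOn_const (C := Cs)
        measure_Ioc_lt_top.ne).congr_fun (fun x hx => ?_) measurableSet_Ioc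
      simp [hGdef, hx.2]
    · have h4 : IntegrableOn (fun x : ℝ => Cl * x ^ (-2:ℝ)) (Ioi 1) :=
        (integrableOn_Ioi_rpow_of_lt (by norm_num) one_pos).const_mul Cl
      refine h4.congr_fun (fun x hx => ?_) measurableSet_Ioi
      have hx1 : (1:ℝ) < x := hx
      have : x ^ (-2:ℝ) = (x ^ 2)⁻¹ := by
        rw [Real.rpow_neg (by linarith), show ((2:ℝ)) = ((2:ℕ):ℝ) by norm_num,
          Real.rpow_natCast]
      rw [hGdef]
      simp only [if_neg (not_le.2 hx1)]
      rw [this, div_eq_mul_inv]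
  apply Integrable.mono' hGint hmeas
  rw [ae_restrict_iff' measurableSet_Ioi]
  refine ae_of_all _ fun x hx => ?_
  have hx0 : (0:ℝ) < x := hx
  rw [Real.norm_eq_abs, abs_of_nonneg (div_nonneg (norm_nonneg _) hx0.le)]
  by_cases hx1 : x ≤ 1
  · have h := hsmall x ⟨hx0, hx1⟩
    rw [hGdef]
    simp only [if_pos hx1]
    rw [div_le_iff₀ hx0]
    linarith
  · push_neg at hx1
    have h := hlarge x hx1
    rw [hGdef]
    simp only [if_neg (not_le.2 hx1)]
    rw [div_le_div_iff₀ hx0 (by positivity)]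
    calc ‖Xi f x‖ * x ^ 2 ≤ (Cl / x) * x ^ 2 :=
          mul_le_mul_of_nonneg_right h (by positivity)
      _ = Cl * x := by field_simp
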